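/- If the weighted envy-graph of an allocation X has no positive-cost directed cycle, then setting each agent i's subsidy p_i := w_i · ℓ_i(X), where ℓ_i(X) is the maximum cost of a directed path starting at i (and 0 if all such paths have nonpositive cost), makes (X, p) weighted envy-free: (v_i(X_i)+p_i)/w_i ≥ (v_i(X_j)+p_j)/w_j for all i, j. -/

import Mathlib

/-- Cost of a path (list of vertices): sum of edge costs of consecutive pairs. -/
def pathCost {N : Type*} (c : N → N → ℝ) : List N → ℝ
  | a :: b :: rest => c a b + pathCost c (b :: rest)
  | _ => 0

/-- Cost of a directed cycle given by a list of distinct vertices. -/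
def cycleCost {N : Type*} (c : N → N → ℝ) (l : List N) : ℝ :=
  pathCost c (l ++ l.take 1)

/-- The set of costs of simple paths starting at `i`
(the single-vertex path `[i]` has cost `0`, so `0` is in the set). -/
def startCosts {N : Type*} (c : N → N → ℝ) (i : N) : Set ℝ :=
  {x | ∃ l : List N, l.Nodup ∧ l.head? = some i ∧ pathCost c l = x}

lemma pathCost_append {N : Type*} (c : N → N → ℝ) :
    ∀ (xs : List N) (y : N) (ys : List N),
      pathCost c (xs ++ y :: ys) = pathCost c (xs ++ [y]) + pathCost c (y :: ys)
  | [], y, ys => by simp [pathCost]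
  | [a], y, ys => by simp [pathCost]
  | a :: b :: t, y, ys => by
    have ih := pathCost_append c (b :: t) y ys
    simp only [List.cons_append, pathCost] at *
    rw [ih]; ring

/-- if the weighted envy-graph has no positive-cost cycle, then
subsidies `p i = w i * ℓ i` (with `ℓ i` the maximum cost of a path starting at `i`)
make the outcome weighted envy-free. -/
theorem stmt2 {N : Type*} [Fintype N]
    (w : N → ℝ) (hw : ∀ i, 0 < w i)
    (v : N → N → ℝ) (hv : ∀ i j, 0 ≤ v i j)
    (hcyc : ∀ l : List N, l.Nodup →
      cycleCost (fun i j => v i j / w j - v i i / w i) l ≤ 0)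
    (ℓ : N → ℝ)
    (hℓ : ∀ i, IsGreatest
      (startCosts (fun i j => v i j / w j - v i i / w i) i) (ℓ i)) :
    ∀ i j, (v i i + w i * ℓ i) / w i ≥ (v i j + w j * ℓ j) / w j := by
  set c : N → N → ℝ := fun i j => v i j / w j - v i i / w i with hc
  intro i j
  -- key inequality : ℓ i ≥ c i j + ℓ j
  have key : c i j + ℓ j ≤ ℓ i := by
    obtain ⟨l, hnd, hhd, hcost⟩ := (hℓ j).1
    obtain ⟨l', rfl⟩ : ∃ l', l = j :: l' := by
      cases l with
      | nil => simp at hhd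
      | cons a t => exact ⟨t, by simpa using congrArg (fun o => o.getD a :: t) hhd⟩
    by_cases hi : i ∈ j :: l'
    · obtain ⟨a, b, hab⟩ := List.append_of_mem hi
      have hsplit : i :: j :: l' = (i :: a) ++ i :: b := by rw [hab]; rfl
      have hnd' : (a ++ i :: b).Nodup := hab ▸ hnd
      rw [List.nodup_append] at hnd'
      have hia : (i :: a).Nodup := by
        refine List.nodup_cons.mpr ⟨fun h => hnd'.2.2 i h i List.mem_cons_self rfl, hnd'.1⟩
      have hib : (i :: b).Nodup := hnd'.2.1
      have e1 : pathCost c (i :: j :: l') = c i j + pathCost c (j :: l') := rfl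
      have e2 : pathCost c ((i :: a) ++ i :: b)
          = pathCost c ((i :: a) ++ [i]) + pathCost c (i :: b) :=
        pathCost_append c (i :: a) i b
      have e3 : cycleCost c (i :: a) = pathCost c ((i :: a) ++ [i]) := rfl
      have h1 : cycleCost c (i :: a) ≤ 0 := hcyc _ hia
      have h2 : pathCost c (i :: b) ≤ ℓ i := (hℓ i).2 ⟨i :: b, hib, rfl, rfl⟩
      have : c i j + pathCost c (j :: l') = cycleCost c (i :: a) + pathCost c (i :: b) := by
        rw [← e1, hsplit, e2, e3]
      linarith [hcost ▸ this]
    · have hnd2 : (i :: j :: l').Nodup := List.nodup_cons.mpr ⟨hi, hnd⟩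
      have h2 : pathCost c (i :: j :: l') ≤ ℓ i := (hℓ i).2 ⟨i :: j :: l', hnd2, rfl, rfl⟩
      have e1 : pathCost c (i :: j :: l') = c i j + pathCost c (j :: l') := rfl
      rw [e1, hcost] at h2
      exact h2
  have hwi := (hw i).ne'
  have hwj := (hw j).ne'
  have d1 : (v i i + w i * ℓ i) / w i = v i i / w i + ℓ i := by
    field_simp
  have d2 : (v i j + w j * ℓ j) / w j = v i j / w j + ℓ j := by
    field_simp
  rw [d1, d2]
  have : c i j = v i j / w j - v i i / w i := rfl
  linarith [key, this ▸ key]
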